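/- For R ≥ 3, the minimum of α^T S α over all real symmetric positive semidefinite R×R matrices S with unit diagonal (S_{ii} = 1 for all i) equals 0, where α is the vector of Richardson-Romberg weights α_r = (-1)^(R-r) r^R/(r!(R-r)!). In particular, the all-ones matrix 𝟏𝟏^T (for which α^T(𝟏𝟏^T)α = 1) is not a minimizer. -/

import Mathlib

open Matrix Finset
open scoped fwdDiff Nat

private lemma fd_pow : ∀ n : ℕ, ∀ k : ℕ, k ≤ n →
    (fwdDiff (1:ℕ))^[n] (fun x : ℕ => (x : ℝ) ^ k) 0 = if k = n then (n ! : ℝ) else 0 := by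
  intro n
  induction n with
  | zero =>
    intro k hk
    interval_cases k
    simp
  | succ n IH =>
    intro k hk
    rw [Function.iterate_succ_apply]
    have hΔ : (fwdDiff (1:ℕ)) (fun x : ℕ => (x : ℝ) ^ k)
        = ∑ j ∈ Finset.range k, (fun x : ℕ => (k.choose j : ℝ) • (x : ℝ) ^ j) := by
      funext x
      simp only [fwdDiff, Finset.sum_apply]
      push_cast
      rw [add_pow, Finset.sum_range_succ]
      simp only [one_pow, mul_one, Nat.choose_self, Nat.cast_one, add_sub_cancel_right,
        smul_eq_mul]
      exact Finset.sum_congr rfl fun j _ => mul_comm _ _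
    rw [hΔ, fwdDiff_iter_finset_sum, Finset.sum_apply]
    have step : ∀ j ∈ Finset.range k,
        (fwdDiff (1:ℕ))^[n] (fun x : ℕ => (k.choose j : ℝ) • (x : ℝ) ^ j) 0
          = if j = n then (k.choose j : ℝ) * (n ! : ℝ) else 0 := by
      intro j hj
      rw [show (fun x : ℕ => (k.choose j : ℝ) • (x : ℝ) ^ j)
            = (k.choose j : ℝ) • (fun x : ℕ => (x : ℝ) ^ j) from rfl,
        fwdDiff_iter_const_smul, Pi.smul_apply, IH j (by
          have := Finset.mem_range.mp hj; omega), smul_eq_mul, mul_ite, mul_zero]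
    rw [Finset.sum_congr rfl step, Finset.sum_ite_eq' (Finset.range k) n
      (fun j => (k.choose j : ℝ) * (n ! : ℝ))]
    by_cases hk1 : k = n + 1
    · subst hk1
      simp only [Finset.mem_range, lt_add_iff_pos_left, Nat.lt_irrefl, if_pos (Nat.lt_succ_self n),
        Nat.choose_succ_self_right, if_pos rfl, Nat.factorial_succ]
      push_cast
      ring
    · have hkn : k ≤ n := by omega
      rw [if_neg (by simp only [Finset.mem_range]; omega), if_neg (by omega)]

private lemma key_sum (R : ℕ) :
    ∑ k ∈ Finset.range (R + 1), (-1 : ℝ) ^ (R - k) * (R.choose k : ℝ) * (k : ℝ) ^ R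
      = (R ! : ℝ) := by
  have h := fwdDiff_iter_eq_sum_shift (1 : ℕ) (fun x : ℕ => (x : ℝ) ^ R) R 0
  rw [fd_pow R R le_rfl, if_pos rfl] at h
  rw [h]
  refine Finset.sum_congr rfl fun k hk => ?_
  rw [zsmul_eq_mul]
  push_cast
  simp [smul_eq_mul]

/-- The triangle construction: build a PSD correlation matrix annihilating the
quadratic form. -/
private lemma construction {R : ℕ} (α : Fin R → ℝ) (iA iB : Fin R) (hne : iA ≠ iB)
    (a b : ℝ) (hA : α iA = a) (hB : α iB = -b) (hsum : ∑ r, α r = 1)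
    (ha1 : 1 ≤ a) (hb : 0 < b) (hab : 2 * (a - b) ≤ 1) :
    ∃ S : Matrix (Fin R) (Fin R) ℝ, S.PosSemidef ∧ (∀ i, S i i = 1)
      ∧ α ⬝ᵥ S.mulVec α = 0 := by
  set tc : ℝ := 1 - a + b with htc_def
  have ha0 : (0:ℝ) < a := by linarith
  have htc0 : (0:ℝ) < tc := by simp only [htc_def]; linarith
  set X : ℝ := (a^2 + tc^2 - b^2) / (2*a*tc) with hX_def
  set Y : ℝ := (b^2 + tc^2 - a^2) / (2*b*tc) with hY_def
  have ht1 : a ≤ b + tc := by simp only [htc_def]; linarith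
  have ht2 : b ≤ a + tc := by simp only [htc_def]; linarith
  have ht3 : tc ≤ a + b := by simp only [htc_def]; linarith
  have hX2 : X^2 ≤ 1 := by
    rw [hX_def, div_pow, div_le_one (by positivity)]
    nlinarith [mul_nonneg (mul_nonneg (mul_nonneg
      (by linarith : (0:ℝ) ≤ a + tc + b) (by linarith : (0:ℝ) ≤ a + tc - b))
      (by linarith : (0:ℝ) ≤ b + a - tc)) (by linarith : (0:ℝ) ≤ b - a + tc)]
  have hY2 : Y^2 ≤ 1 := by
    rw [hY_def, div_pow, div_le_one (by positivity)]
    nlinarith [mul_nonneg (mul_nonneg (mul_nonneg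
      (by linarith : (0:ℝ) ≤ b + tc + a) (by linarith : (0:ℝ) ≤ b + tc - a))
      (by linarith : (0:ℝ) ≤ a + b - tc)) (by linarith : (0:ℝ) ≤ a - b + tc)]
  set sx : ℝ := Real.sqrt (1 - X^2) with hsx_def
  set sy : ℝ := Real.sqrt (1 - Y^2) with hsy_def
  have hsx2 : sx^2 = 1 - X^2 := Real.sq_sqrt (by linarith)
  have hsy2 : sy^2 = 1 - Y^2 := Real.sq_sqrt (by linarith)
  set c : Fin R → ℝ := fun r => if r = iA then X else if r = iB then -Y else -1 with hc_def
  set s : Fin R → ℝ := fun r => if r = iA then sx else if r = iB then sy else 0 with hs_def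
  set S : Matrix (Fin R) (Fin R) ℝ := Matrix.of (fun i j => c i * c j + s i * s j) with hS_def
  have hSapp : ∀ i j, S i j = c i * c j + s i * s j := fun i j => rfl
  have hunit : ∀ i, c i ^ 2 + s i ^ 2 = 1 := by
    intro i
    simp only [hc_def, hs_def]
    split_ifs
    · rw [hsx2]; ring
    · rw [hsy2]; ring
    · norm_num
  have hquad : ∀ x : Fin R → ℝ,
      x ⬝ᵥ S.mulVec x = (∑ i, x i * c i)^2 + (∑ i, x i * s i)^2 := by
    intro x
    simp only [dotProduct, Matrix.mulVec, dotProduct, hSapp]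
    rw [sq, sq, Finset.sum_mul_sum, Finset.sum_mul_sum, ← Finset.sum_add_distrib]
    refine Finset.sum_congr rfl fun i _ => ?_
    rw [Finset.mul_sum, ← Finset.sum_add_distrib]
    exact Finset.sum_congr rfl fun j _ => by ring
  have hherm : S.IsHermitian := by
    ext i j
    simp only [Matrix.conjTranspose_apply, hSapp, star_trivial]
    ring
  have hpsd : S.PosSemidef := by
    refine Matrix.PosSemidef.of_dotProduct_mulVec_nonneg hherm fun x => ?_
    rw [show star x = x from funext fun i => star_trivial _, hquad x]
    positivity
  have hiBmem : iB ∈ Finset.univ.erase iA :=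
    Finset.mem_erase.mpr ⟨hne.symm, Finset.mem_univ iB⟩
  have split : ∀ f : Fin R → ℝ,
      ∑ i, f i = f iA + (f iB + ∑ i ∈ (Finset.univ.erase iA).erase iB, f i) := by
    intro f
    rw [← Finset.add_sum_erase _ f (Finset.mem_univ iA), ← Finset.add_sum_erase _ f hiBmem]
  have hmem : ∀ i ∈ (Finset.univ.erase iA).erase iB, i ≠ iA ∧ i ≠ iB := by
    intro i hi
    have h1 := Finset.mem_erase.mp hi
    have h2 := Finset.mem_erase.mp h1.2
    exact ⟨h2.1, h1.1⟩
  have hrest : ∑ i ∈ (Finset.univ.erase iA).erase iB, α i = tc := by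
    have h0 := split α
    rw [hsum, hA, hB] at h0
    simp only [htc_def]
    linarith
  have hciA : c iA = X := by simp [hc_def]
  have hciB : c iB = -Y := by simp only [hc_def]; rw [if_neg hne.symm]; simp
  have hsiA : s iA = sx := by simp [hs_def]
  have hsiB : s iB = sy := by simp only [hs_def]; rw [if_neg hne.symm]; simp
  have hdotc : ∑ i, α i * c i = 0 := by
    rw [split (fun i => α i * c i)]
    have hr : ∑ i ∈ (Finset.univ.erase iA).erase iB, α i * c i = -tc := by
      have e : ∀ i ∈ (Finset.univ.erase iA).erase iB, α i * c i = -(α i) := by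
        intro i hi
        obtain ⟨h1, h2⟩ := hmem i hi
        simp only [hc_def]
        rw [if_neg h1, if_neg h2]
        ring
      rw [Finset.sum_congr rfl e, Finset.sum_neg_distrib, hrest]
    rw [hr, hA, hB, hciA, hciB]
    have haX : a * X = (a^2 + tc^2 - b^2) / (2*tc) := by
      rw [hX_def]; field_simp
    have hbY : b * Y = (b^2 + tc^2 - a^2) / (2*tc) := by
      rw [hY_def]; field_simp
    have hfin : a * X + b * Y = tc := by
      rw [haX, hbY]; field_simp; ring
    linear_combination hfin
  have hdots : ∑ i, α i * s i = 0 := by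
    rw [split (fun i => α i * s i)]
    have hr : ∑ i ∈ (Finset.univ.erase iA).erase iB, α i * s i = 0 := by
      refine Finset.sum_eq_zero fun i hi => ?_
      obtain ⟨h1, h2⟩ := hmem i hi
      simp only [hs_def]
      rw [if_neg h1, if_neg h2, mul_zero]
    rw [hr, hA, hB, hsiA, hsiB]
    have h1 : a * sx = Real.sqrt (a^2 * (1 - X^2)) := by
      rw [hsx_def, Real.sqrt_mul (sq_nonneg a), Real.sqrt_sq ha0.le]
    have h2 : b * sy = Real.sqrt (b^2 * (1 - Y^2)) := by
      rw [hsy_def, Real.sqrt_mul (sq_nonneg b), Real.sqrt_sq hb.le]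
    have h3 : a^2 * (1 - X^2) = b^2 * (1 - Y^2) := by
      rw [hX_def, hY_def]; field_simp; ring
    have h4 : a * sx = b * sy := by rw [h1, h2, h3]
    linear_combination h4
  refine ⟨S, hpsd, fun i => ?_, ?_⟩
  · rw [hSapp i i]
    linear_combination hunit i
  · rw [hquad α, hdotc, hdots]
    norm_num

theorem stmt_11 (R : ℕ) (hR : 3 ≤ R)
    (α : Fin R → ℝ)
    (hα : ∀ r : Fin R, α r =
      (-1 : ℝ) ^ (R - ((r : ℕ) + 1)) * ((r : ℕ) + 1 : ℝ) ^ R /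
        (Nat.factorial ((r : ℕ) + 1) * Nat.factorial (R - ((r : ℕ) + 1)))) :
    IsLeast {x : ℝ | ∃ S : Matrix (Fin R) (Fin R) ℝ,
        S.PosSemidef ∧ (∀ i, S i i = 1) ∧ x = α ⬝ᵥ S.mulVec α} 0
    ∧ α ⬝ᵥ (Matrix.of (fun _ _ => (1 : ℝ)) : Matrix (Fin R) (Fin R) ℝ).mulVec α = 1 := by
  have hRfac : (0:ℝ) < (R ! : ℝ) := by positivity
  have hR3 : (3:ℝ) ≤ (R:ℝ) := by exact_mod_cast hR
  -- total sum of the weights is 1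
  have hsum : ∑ r, α r = 1 := by
    have h1 : ∑ r, α r = ∑ i ∈ Finset.range R,
        ((-1 : ℝ) ^ (R - (i + 1)) * ((i : ℝ) + 1) ^ R /
          (Nat.factorial (i + 1) * Nat.factorial (R - (i + 1)))) := by
      rw [← Fin.sum_univ_eq_sum_range (fun i =>
        ((-1 : ℝ) ^ (R - (i + 1)) * ((i : ℝ) + 1) ^ R /
          (Nat.factorial (i + 1) * Nat.factorial (R - (i + 1))))) R]
      exact Finset.sum_congr rfl fun r _ => hα r
    have h2 := key_sum R
    rw [Finset.sum_range_succ'] at h2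
    have h0 : (-1 : ℝ) ^ (R - 0) * (R.choose 0 : ℝ) * ((0:ℕ) : ℝ) ^ R = 0 := by
      rw [Nat.cast_zero, zero_pow (by omega), mul_zero]
    rw [h0, add_zero] at h2
    have h3 : ∀ i ∈ Finset.range R,
        ((-1 : ℝ) ^ (R - (i + 1)) * ((i : ℝ) + 1) ^ R /
          (Nat.factorial (i + 1) * Nat.factorial (R - (i + 1))))
        = (-1 : ℝ) ^ (R - (i+1)) * (R.choose (i+1) : ℝ) * ((i+1 : ℕ) : ℝ) ^ R / (R ! : ℝ) := by
      intro i hi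
      have hle : i + 1 ≤ R := Finset.mem_range.mp hi
      have hC : ((R.choose (i+1) : ℝ)) * (Nat.factorial (i+1) : ℝ) *
          (Nat.factorial (R - (i+1)) : ℝ) = (R ! : ℝ) := by
        exact_mod_cast congrArg (Nat.cast (R := ℝ))
          (Nat.choose_mul_factorial_mul_factorial hle)
      rw [div_eq_div_iff (by positivity) hRfac.ne', ← hC]
      push_cast
      ring
    rw [h1, Finset.sum_congr rfl h3, ← Finset.sum_div, h2, div_self hRfac.ne']
  -- the two distinguished indices
  have hR1 : R - 1 < R := by omega
  have hR2 : R - 2 < R := by omega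
  set iA : Fin R := ⟨R - 1, hR1⟩ with hiA_def
  set iB : Fin R := ⟨R - 2, hR2⟩ with hiB_def
  have hne : iA ≠ iB := by
    simp only [hiA_def, hiB_def, Ne, Fin.mk.injEq]
    omega
  set a : ℝ := (R:ℝ)^R / (R ! : ℝ) with ha_def
  set b : ℝ := (R:ℝ) * ((R:ℝ) - 1)^R / (R ! : ℝ) with hb_def
  have hcastR1 : (((R - 1 : ℕ)) : ℝ) = (R:ℝ) - 1 := by
    rw [Nat.cast_sub (by omega)]; norm_num
  have hcastR2 : (((R - 2 : ℕ)) : ℝ) = (R:ℝ) - 2 := by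
    rw [Nat.cast_sub (by omega)]; norm_num
  have hfacpred : (R:ℝ) * ((R-1)! : ℝ) = (R ! : ℝ) := by
    exact_mod_cast congrArg (Nat.cast (R := ℝ)) (Nat.mul_factorial_pred (by omega))
  have hA : α iA = a := by
    rw [hα iA]
    have e1 : ((iA : ℕ)) = R - 1 := rfl
    rw [e1, show (R - 1) + 1 = R from by omega, Nat.sub_self, hcastR1]
    simp only [pow_zero, Nat.factorial_zero, Nat.cast_one, mul_one, one_mul, ha_def]
    norm_num
  have hB : α iB = -b := by
    rw [hα iB]
    have e1 : ((iB : ℕ)) = R - 2 := rfl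
    rw [e1, show (R - 2) + 1 = R - 1 from by omega, show R - (R - 1) = 1 from by omega,
      hcastR2]
    simp only [pow_one, Nat.factorial_one, Nat.cast_one, mul_one]
    rw [hb_def, ← hfacpred]
    have hfp : (0:ℝ) < ((R-1)! : ℝ) := by positivity
    have : ((R:ℝ) - 2) + 1 = (R:ℝ) - 1 := by ring
    rw [this]
    field_simp
  have ha1 : 1 ≤ a := by
    rw [ha_def, le_div_iff₀ hRfac, one_mul]
    exact_mod_cast Nat.factorial_le_pow R
  have hb : 0 < b := by
    rw [hb_def]
    apply div_pos _ hRfac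
    apply mul_pos (by linarith)
    apply pow_pos
    linarith
  have hab : 2 * (a - b) ≤ 1 := by
    rcases eq_or_lt_of_le hR with hR3' | hR4
    · -- R = 3
      have : R = 3 := hR3'.symm
      subst this
      rw [ha_def, hb_def]
      norm_num [Nat.factorial]
    · -- R ≥ 4 : a ≤ b
      have hR4' : 4 ≤ R := hR4
      have hx3 : (3:ℝ) ≤ (R:ℝ) - 1 := by
        have : (4:ℝ) ≤ (R:ℝ) := by exact_mod_cast hR4'
        linarith
      set x : ℝ := (R:ℝ) - 1 with hx_def
      have hx0 : (0:ℝ) < x := by linarith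
      have key : ((R:ℝ))^R ≤ (R:ℝ) * x^R := by
        have hexp1 : (1 + 1/x) ≤ Real.exp (1/x) := by
          have := Real.add_one_le_exp (1/x)
          linarith
        have h2 : (1 + 1/x)^(R-1) ≤ Real.exp (1/x)^(R-1) :=
          pow_le_pow_left₀ (by positivity) hexp1 _
        have h3 : Real.exp (1/x)^(R-1) = Real.exp 1 := by
          rw [← Real.exp_nat_mul]
          congr 1
          rw [hcastR1]
          field_simp
        have h4 : (1 + 1/x)^(R-1) ≤ x := by
          have := Real.exp_one_lt_d9
          rw [h3] at h2
          linarith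
        have h5 : ((R:ℝ))^(R-1) = (1 + 1/x)^(R-1) * x^(R-1) := by
          rw [← mul_pow]
          congr 1
          rw [hx_def]
          have hx1 : (R:ℝ) - 1 ≠ 0 := by linarith
          rw [add_mul, one_mul, one_div_mul_cancel hx1]; ring
        have h6 : ((R:ℝ))^(R-1) ≤ x * x^(R-1) := by
          rw [h5]
          exact mul_le_mul_of_nonneg_right h4 (by positivity)
        have h7 : x * x^(R-1) = x^R := by
          rw [← pow_succ']
          congr 1
          omega
        calc ((R:ℝ))^R = (R:ℝ) * ((R:ℝ))^(R-1) := by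
              rw [← pow_succ']
              congr 1
              omega
          _ ≤ (R:ℝ) * x^R := by
              rw [h7] at h6
              exact mul_le_mul_of_nonneg_left h6 (by linarith)
      have hableq : a ≤ b := by
        rw [ha_def, hb_def]
        exact (div_le_div_iff_of_pos_right hRfac).mpr key
      linarith
  obtain ⟨S, hpsd, hdiag, hzero⟩ := construction α iA iB hne a b hA hB hsum ha1 hb hab
  refine ⟨⟨⟨S, hpsd, hdiag, hzero.symm⟩, ?_⟩, ?_⟩
  · rintro x ⟨T, hT, -, rfl⟩
    have := hT.dotProduct_mulVec_nonneg α
    simpa using this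
  · have h2 : (Matrix.of (fun _ _ => (1:ℝ)) : Matrix (Fin R) (Fin R) ℝ).mulVec α
        = fun _ => 1 := by
      funext i
      simp [Matrix.mulVec, dotProduct, hsum]
    rw [h2]
    simp [dotProduct, hsum]
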